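/- Let Φ_t be a continuous linear flow on a real vector bundle V → M over a compact base, equipped with a continuous fiberwise norm |·| and a constant α > 0, which decomposes as an invariant Whitney sum V = S ⊕ U with |Φ_t(v)| ≤ e^{-αt}|v| for v ∈ S, t ≥ 0, and |Φ_t(v)| ≥ e^{αt}|v| for v ∈ U, t ≥ 0. Define B_1 = {v : |v^s| ≤ 1, |v^u| ≤ 1} and B_0 = {v : |v^s| ≤ 1, |v^u| = 1}, where v = v^s + v^u is the decomposition. Then (B_1, B_0) is an index pair for the zero section M_0 of V: (1) cl(B_1 ∖ B_0) = B_1 is an isolating neighborhood of M_0; (2) B_0 is positively invariant relative to B_1; (3) every orbit leaving B_1 in forward time exits through B_0. -/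

import Mathlib

open Filter Topology Set


/-- Let `Φ` be a continuous linear flow on a vector bundle `V → M` over a
compact base, covering a base flow `φ`, with an invariant Whitney decomposition given by
fiberwise complementary linear projections `ps` (stable) and `pu` (unstable) and
hyperbolic estimates `|Φ_t v| ≤ e^{-αt}|v|` on `S = ker pu` and `|Φ_t v| ≥ e^{αt}|v|` on
`U = ker ps`, for `t ≥ 0`.  With `B₁ = {|v^s| ≤ 1, |v^u| ≤ 1}` and
`B₀ = {|v^s| ≤ 1, |v^u| = 1}`, the pair `(B₁, B₀)` is an index pair for the zero
section `M₀`:  (1) `cl(B₁ ∖ B₀) = B₁` is an isolating neighborhood of `M₀`;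
(2) `B₀` is positively invariant relative to `B₁`; (3) every orbit leaving `B₁` in
forward time exits through `B₀`. -/
theorem stmt_15 {B : Type*} [TopologicalSpace B] [CompactSpace B]
    {E : B → Type*} [∀ b, NormedAddCommGroup (E b)] [∀ b, NormedSpace ℝ (E b)]
    (φ : ℝ → B → B) (Φ : ℝ → (Σ b, E b) → (Σ b, E b))
    (hΦc : Continuous fun p : ℝ × (Σ b, E b) => Φ p.1 p.2)
    (hΦ0 : ∀ x, Φ 0 x = x) (hΦadd : ∀ s t x, Φ (s + t) x = Φ s (Φ t x))
    (hcover : ∀ t x, (Φ t x).1 = φ t x.1)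
    -- the stable/unstable projections: complementary fiberwise linear projections
    (ps pu : ∀ b, E b →ₗ[ℝ] E b)
    (hps : ∀ b, (ps b).comp (ps b) = ps b) (hpu : ∀ b, (pu b).comp (pu b) = pu b)
    (hsum : ∀ b, ps b + pu b = LinearMap.id)
    (hmix : ∀ b, (ps b).comp (pu b) = 0 ∧ (pu b).comp (ps b) = 0)
    -- hyperbolicity
    (α : ℝ) (hα : 0 < α)
    (hS : ∀ t ≥ (0 : ℝ), ∀ x : Σ b, E b,
      ‖ps (Φ t x).1 (Φ t x).2‖ ≤ Real.exp (-(α * t)) * ‖ps x.1 x.2‖)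
    (hU : ∀ t ≥ (0 : ℝ), ∀ x : Σ b, E b,
      Real.exp (α * t) * ‖pu x.1 x.2‖ ≤ ‖pu (Φ t x).1 (Φ t x).2‖)
    -- the zero section is invariant
    (hM0 : ∀ t, Φ t '' {x : Σ b, E b | x.2 = 0} = {x : Σ b, E b | x.2 = 0})
    (B1 B0 M0 : Set (Σ b, E b))
    (hB1 : B1 = {x | ‖ps x.1 x.2‖ ≤ 1 ∧ ‖pu x.1 x.2‖ ≤ 1})
    (hB0 : B0 = {x | ‖ps x.1 x.2‖ ≤ 1 ∧ ‖pu x.1 x.2‖ = 1})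
    (hM0' : M0 = {x | x.2 = 0}) :
    -- (1) cl(B₁ ∖ B₀) = B₁ is an isolating neighborhood of the zero section M₀
    (closure (B1 \ B0) = B1 ∧ M0 ⊆ interior B1 ∧
      ∀ x ∈ B1, (∀ t : ℝ, Φ t x ∈ B1) → x ∈ M0) ∧
    -- (2) B₀ is positively invariant with respect to B₁
    (∀ x ∈ B0, ∀ t ≥ (0 : ℝ), (∀ s, 0 ≤ s → s ≤ t → Φ s x ∈ B1) → Φ t x ∈ B0) ∧
    -- (3) orbits leaving B₁ in forward time exit through B₀
    (∀ x ∈ B1, (∃ t' > (0 : ℝ), Φ t' x ∉ B1) →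
      ∃ tm ≥ (0 : ℝ), Φ tm x ∈ B0 ∧ ∀ t, 0 ≤ t → t ≤ tm → Φ t x ∈ B1) := by
  subst hB1 hB0 hM0'
  classical
  -- basic flow facts
  have hflowinv : ∀ (t : ℝ) (x : Σ b, E b), Φ t (Φ (-t) x) = x := by
    intro t x
    rw [← hΦadd]
    simp [hΦ0]
  have horb : ∀ y : Σ b, E b, Continuous fun t : ℝ => Φ t y := fun y =>
    hΦc.comp (continuous_id.prodMk continuous_const)
  have hzero : ∀ (t : ℝ) (b : B), (Φ t ⟨b, (0 : E b)⟩).2 = 0 := by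
    intro t b
    have hmem : Φ t ⟨b, (0 : E b)⟩ ∈ {x : Σ b, E b | x.2 = 0} := by
      rw [← hM0 t]
      exact ⟨⟨b, 0⟩, rfl, rfl⟩
    exact hmem
  have hdecomp : ∀ (b : B) (w : E b), ps b w = w - pu b w := by
    intro b w
    have h := LinearMap.congr_fun (hsum b) w
    simp only [LinearMap.add_apply, LinearMap.id_apply] at h
    exact eq_sub_of_add_eq h
  have hdecomp' : ∀ (b : B) (w : E b), pu b w = w - ps b w := by
    intro b w
    have h := LinearMap.congr_fun (hsum b) w
    simp only [LinearMap.add_apply, LinearMap.id_apply] at h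
    exact eq_sub_of_add_eq (by rw [add_comm]; exact h)
  have hpu_idem : ∀ (b : B) (w : E b), pu b (pu b w) = pu b w := by
    intro b w
    simpa using LinearMap.congr_fun (hpu b) w
  have hps_pu : ∀ (b : B) (w : E b), ps b (pu b w) = 0 := by
    intro b w
    simpa using LinearMap.congr_fun (hmix b).1 w
  -- continuity of the unstable projection on each fiber
  have hpuC : ∀ b : B, Continuous (pu b) := by
    intro b
    have he2 : Real.exp (-α) < Real.exp α := Real.exp_lt_exp.mpr (by linarith)
    have hee : (0:ℝ) < Real.exp α - Real.exp (-α) := by linarith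
    have hprod : Real.exp α * Real.exp (-α) = 1 := by
      rw [← Real.exp_add]; simp
    have key : ∀ v : E b,
        (Real.exp α - Real.exp (-α)) * ‖pu b v‖ ≤
          ‖(Φ (-1) ⟨b, v⟩).2‖ + Real.exp α * ‖v‖ := by
      intro v
      set y := Φ (-1) (⟨b, v⟩ : Σ b, E b) with hydef
      have hxy : Φ 1 y = (⟨b, v⟩ : Σ b, E b) := hflowinv 1 _
      have h1 := hS 1 (by norm_num) y
      have h2 := hU 1 (by norm_num) y
      rw [hxy] at h1 h2
      have h1' : ‖ps b v‖ ≤ Real.exp (-α) * ‖ps y.1 y.2‖ := by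
        simpa using h1
      have h2' : Real.exp α * ‖pu y.1 y.2‖ ≤ ‖pu b v‖ := by
        simpa using h2
      have htri1 : ‖ps y.1 y.2‖ ≤ ‖y.2‖ + ‖pu y.1 y.2‖ := by
        rw [hdecomp y.1 y.2]
        exact norm_sub_le _ _
      have htri2 : ‖pu b v‖ - ‖v‖ ≤ ‖ps b v‖ := by
        have h := hdecomp' b v
        have h3 : ‖pu b v‖ ≤ ‖v‖ + ‖ps b v‖ := by
          rw [h]; exact norm_sub_le _ _
        linarith
      have st1 : Real.exp α * ‖ps b v‖ ≤ ‖ps y.1 y.2‖ := by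
        calc Real.exp α * ‖ps b v‖ ≤ Real.exp α * (Real.exp (-α) * ‖ps y.1 y.2‖) :=
              mul_le_mul_of_nonneg_left h1' (Real.exp_pos α).le
          _ = (Real.exp α * Real.exp (-α)) * ‖ps y.1 y.2‖ := by ring
          _ = ‖ps y.1 y.2‖ := by rw [hprod, one_mul]
      have st2 : ‖pu y.1 y.2‖ ≤ Real.exp (-α) * ‖pu b v‖ := by
        calc ‖pu y.1 y.2‖ = (Real.exp (-α) * Real.exp α) * ‖pu y.1 y.2‖ := by
              rw [mul_comm (Real.exp (-α)), hprod, one_mul]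
          _ = Real.exp (-α) * (Real.exp α * ‖pu y.1 y.2‖) := by ring
          _ ≤ Real.exp (-α) * ‖pu b v‖ :=
              mul_le_mul_of_nonneg_left h2' (Real.exp_pos _).le
      have st3 : Real.exp α * ‖pu b v‖ - Real.exp α * ‖v‖ ≤ Real.exp α * ‖ps b v‖ := by
        nlinarith [mul_le_mul_of_nonneg_left htri2 (Real.exp_pos α).le]
      linarith
    have hnormc : Continuous fun x : Σ b, E b => ‖x.2‖ :=
      continuous_sigma fun c => continuous_norm
    have hcont : Continuous fun v : E b => ‖(Φ (-1) (⟨b, v⟩ : Σ b, E b)).2‖ + Real.exp α * ‖v‖ := by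
      have c2 : Continuous fun v : E b => Φ (-1) (⟨b, v⟩ : Σ b, E b) :=
        hΦc.comp (continuous_const.prodMk continuous_sigmaMk)
      exact (hnormc.comp c2).add (continuous_const.mul continuous_norm)
    have hnh : (fun v : E b => ‖(Φ (-1) (⟨b, v⟩ : Σ b, E b)).2‖ + Real.exp α * ‖v‖) ⁻¹'
        (Set.Iio (Real.exp α - Real.exp (-α))) ∈ 𝓝 (0 : E b) := by
      refine hcont.continuousAt.preimage_mem_nhds (Iio_mem_nhds ?_)
      simpa [hzero] using hee
    obtain ⟨δ, hδ, hball⟩ := Metric.mem_nhds_iff.mp hnh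
    have hsmall : ∀ v : E b, ‖v‖ < δ → ‖pu b v‖ ≤ 1 := by
      intro v hv
      have hmem : v ∈ Metric.ball (0 : E b) δ := mem_ball_zero_iff.mpr hv
      have hlt : ‖(Φ (-1) (⟨b, v⟩ : Σ b, E b)).2‖ + Real.exp α * ‖v‖ <
          Real.exp α - Real.exp (-α) := hball hmem
      have hk := key v
      nlinarith [norm_nonneg (pu b v)]
    have hbound : ∀ v : E b, ‖pu b v‖ ≤ (2/δ) * ‖v‖ := by
      intro v
      rcases eq_or_ne v 0 with rfl | hv
      · simp
      · have hnv : 0 < ‖v‖ := norm_pos_iff.mpr hv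
        have hc : (0:ℝ) < δ / (2 * ‖v‖) := by positivity
        have hcv : ‖(δ / (2 * ‖v‖)) • v‖ < δ := by
          rw [norm_smul, Real.norm_eq_abs, abs_of_pos hc]
          have heq : δ / (2 * ‖v‖) * ‖v‖ = δ / 2 := by
            field_simp
          rw [heq]; linarith
        have h1 := hsmall _ hcv
        rw [map_smul, norm_smul, Real.norm_eq_abs, abs_of_pos hc] at h1
        have h2 : δ * ‖pu b v‖ ≤ 2 * ‖v‖ := by
          have h3 := mul_le_mul_of_nonneg_left h1 (by positivity : (0:ℝ) ≤ 2 * ‖v‖)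
          calc δ * ‖pu b v‖ = (2 * ‖v‖) * (δ / (2 * ‖v‖) * ‖pu b v‖) := by
                field_simp
            _ ≤ (2 * ‖v‖) * 1 := h3
            _ = 2 * ‖v‖ := mul_one _
        calc ‖pu b v‖ = (δ * ‖pu b v‖) / δ := by field_simp
          _ ≤ (2 * ‖v‖) / δ := (div_le_div_iff_of_pos_right hδ).mpr h2
          _ = 2/δ * ‖v‖ := by ring
    exact AddMonoidHomClass.continuous_of_bound (pu b) (2/δ) hbound
  have hpsC : ∀ b : B, Continuous (ps b) := by
    intro b
    have h : Continuous fun v : E b => v - pu b v := continuous_id.sub (hpuC b)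
    exact h.congr fun v => (hdecomp b v).symm
  have hGc : Continuous fun x : Σ b, E b => ‖pu x.1 x.2‖ :=
    continuous_sigma fun b => (hpuC b).norm
  have hFc : Continuous fun x : Σ b, E b => ‖ps x.1 x.2‖ :=
    continuous_sigma fun b => (hpsC b).norm
  have hB1closed : IsClosed {x : Σ b, E b | ‖ps x.1 x.2‖ ≤ 1 ∧ ‖pu x.1 x.2‖ ≤ 1} :=
    (isClosed_le hFc continuous_const).inter (isClosed_le hGc continuous_const)
  refine ⟨⟨?_, ?_, ?_⟩, ?_, ?_⟩
  · -- closure (B1 \ B0) = B1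
    apply Set.Subset.antisymm
    · calc closure ({x : Σ b, E b | ‖ps x.1 x.2‖ ≤ 1 ∧ ‖pu x.1 x.2‖ ≤ 1} \
            {x : Σ b, E b | ‖ps x.1 x.2‖ ≤ 1 ∧ ‖pu x.1 x.2‖ = 1})
          ⊆ closure {x : Σ b, E b | ‖ps x.1 x.2‖ ≤ 1 ∧ ‖pu x.1 x.2‖ ≤ 1} :=
            closure_mono Set.diff_subset
        _ = {x : Σ b, E b | ‖ps x.1 x.2‖ ≤ 1 ∧ ‖pu x.1 x.2‖ ≤ 1} := hB1closed.closure_eq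
    · rintro ⟨b, v⟩ hx
      obtain ⟨hs1, hu1⟩ := hx
      have ht1 : Tendsto (fun n : ℕ => ((n : ℝ) + 1)⁻¹) atTop (𝓝 0) := by
        simpa only [one_div] using tendsto_one_div_add_atTop_nhds_zero_nat (𝕜 := ℝ)
      have ht2 : Tendsto (fun n : ℕ => v - ((n:ℝ)+1)⁻¹ • pu b v) atTop (𝓝 v) := by
        have h := ht1.smul_const (pu b v)
        simpa using tendsto_const_nhds.sub h
      have ht3 : Tendsto (fun n : ℕ => (⟨b, v - ((n:ℝ)+1)⁻¹ • pu b v⟩ : Σ b, E b))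
          atTop (𝓝 ⟨b, v⟩) := (continuous_sigmaMk.tendsto v).comp ht2
      refine mem_closure_of_tendsto ht3 (Filter.Eventually.of_forall fun n => ?_)
      have hc0 : (0:ℝ) < ((n:ℝ)+1)⁻¹ := by positivity
      have hc1 : ((n:ℝ)+1)⁻¹ ≤ 1 := by
        rw [inv_le_one_iff₀]
        right
        push_cast
        linarith [Nat.cast_nonneg (α := ℝ) n]
      have hpseq : ps b (v - ((n:ℝ)+1)⁻¹ • pu b v) = ps b v := by
        rw [map_sub, map_smul, hps_pu, smul_zero, sub_zero]
      have hpueq : pu b (v - ((n:ℝ)+1)⁻¹ • pu b v) = (1 - ((n:ℝ)+1)⁻¹) • pu b v := by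
        rw [map_sub, map_smul, hpu_idem, sub_smul, one_smul]
      have hulat : ‖pu b (v - ((n:ℝ)+1)⁻¹ • pu b v)‖ < 1 := by
        rw [hpueq, norm_smul, Real.norm_eq_abs, abs_of_nonneg (by linarith)]
        nlinarith [norm_nonneg (pu b v)]
      refine ⟨⟨?_, hulat.le⟩, ?_⟩
      · rw [hpseq]; exact hs1
      · intro hmem
        exact (ne_of_lt hulat) hmem.2
  · -- M0 ⊆ interior B1
    intro x hx
    have hx2 : x.2 = 0 := hx
    have hopen : IsOpen {y : Σ b, E b | ‖ps y.1 y.2‖ < 1 ∧ ‖pu y.1 y.2‖ < 1} :=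
      (isOpen_lt hFc continuous_const).inter (isOpen_lt hGc continuous_const)
    have hsub : {y : Σ b, E b | ‖ps y.1 y.2‖ < 1 ∧ ‖pu y.1 y.2‖ < 1} ⊆
        {y : Σ b, E b | ‖ps y.1 y.2‖ ≤ 1 ∧ ‖pu y.1 y.2‖ ≤ 1} :=
      fun y hy => ⟨hy.1.le, hy.2.le⟩
    apply interior_maximal hsub hopen
    show ‖ps x.1 x.2‖ < 1 ∧ ‖pu x.1 x.2‖ < 1
    rw [hx2]
    simp
  · -- isolation
    intro x hx1 hall
    have hT : Filter.Tendsto (fun t : ℝ => Real.exp (-(α * t))) Filter.atTop (𝓝 0) := by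
      apply Real.tendsto_exp_atBot.comp
      have h1 : Filter.Tendsto (fun t : ℝ => α * t) Filter.atTop Filter.atTop :=
        Filter.Tendsto.const_mul_atTop hα tendsto_id
      exact tendsto_neg_atTop_atBot.comp h1
    have hustep : ∀ t : ℝ, 0 ≤ t → ‖pu x.1 x.2‖ ≤ Real.exp (-(α * t)) := by
      intro t ht
      have h2 := (hU t ht x).trans (hall t).2
      have hexp : (0:ℝ) < Real.exp (α * t) := Real.exp_pos _
      rw [Real.exp_neg, ← one_div, le_div_iff₀ hexp]
      linarith [mul_comm (Real.exp (α * t)) ‖pu x.1 x.2‖]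
    have hsstep : ∀ t : ℝ, 0 ≤ t → ‖ps x.1 x.2‖ ≤ Real.exp (-(α * t)) := by
      intro t ht
      have h1 := hS t ht (Φ (-t) x)
      rw [hflowinv t x] at h1
      have hb := (hall (-t)).1
      have hexp : (0:ℝ) < Real.exp (-(α * t)) := Real.exp_pos _
      calc ‖ps x.1 x.2‖ ≤ Real.exp (-(α * t)) * ‖ps (Φ (-t) x).1 (Φ (-t) x).2‖ := h1
        _ ≤ Real.exp (-(α * t)) * 1 := mul_le_mul_of_nonneg_left hb hexp.le
        _ = Real.exp (-(α * t)) := mul_one _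
    have hu0 : ‖pu x.1 x.2‖ ≤ 0 :=
      ge_of_tendsto hT (Filter.eventually_atTop.mpr ⟨0, fun t ht => hustep t ht⟩)
    have hs0 : ‖ps x.1 x.2‖ ≤ 0 :=
      ge_of_tendsto hT (Filter.eventually_atTop.mpr ⟨0, fun t ht => hsstep t ht⟩)
    show x.2 = 0
    have hd := LinearMap.congr_fun (hsum x.1) x.2
    simp only [LinearMap.add_apply, LinearMap.id_apply] at hd
    have hnx : ‖x.2‖ ≤ 0 := by
      calc ‖x.2‖ = ‖ps x.1 x.2 + pu x.1 x.2‖ := congrArg norm hd.symm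
        _ ≤ ‖ps x.1 x.2‖ + ‖pu x.1 x.2‖ := norm_add_le _ _
        _ ≤ 0 := by linarith
    exact norm_le_zero_iff.mp hnx
  · -- (2) positive invariance of B0 relative to B1
    intro x hx0 t ht hIn
    obtain ⟨hxs, hxu⟩ := hx0
    have hs' := hS t ht x
    have hu' := hU t ht x
    obtain ⟨hBs, hBu⟩ := hIn t ht (le_refl t)
    have hexp1 : Real.exp (-(α * t)) ≤ 1 :=
      Real.exp_le_one_iff.mpr (neg_nonpos.mpr (mul_nonneg hα.le ht))
    have hexp2 : (1:ℝ) ≤ Real.exp (α * t) := Real.one_le_exp (mul_nonneg hα.le ht)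
    refine ⟨?_, ?_⟩
    · nlinarith [norm_nonneg (ps x.1 x.2), Real.exp_pos (-(α * t))]
    · rw [hxu] at hu'
      refine le_antisymm hBu ?_
      nlinarith
  · -- (3) exit through B0
    rintro x hx1 ⟨t', ht'pos, ht'not⟩
    set S : Set ℝ := {t : ℝ | 0 ≤ t ∧ ∀ s, 0 ≤ s → s ≤ t →
      Φ s x ∈ {y : Σ b, E b | ‖ps y.1 y.2‖ ≤ 1 ∧ ‖pu y.1 y.2‖ ≤ 1}} with hSdef
    have h0S : (0:ℝ) ∈ S := by
      refine ⟨le_refl 0, fun s hs0 hs0' => ?_⟩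
      have hseq : s = 0 := le_antisymm hs0' hs0
      rw [hseq, hΦ0]; exact hx1
    have hSne : S.Nonempty := ⟨0, h0S⟩
    have hSbdd : BddAbove S := by
      refine ⟨t', fun a ha => ?_⟩
      by_contra hlt
      push_neg at hlt
      exact ht'not (ha.2 t' ht'pos.le hlt.le)
    set tm := sSup S with htmdef
    have htm0 : 0 ≤ tm := le_csSup hSbdd h0S
    have hmem_lt : ∀ t, 0 ≤ t → t < tm →
        Φ t x ∈ {y : Σ b, E b | ‖ps y.1 y.2‖ ≤ 1 ∧ ‖pu y.1 y.2‖ ≤ 1} := by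
      intro t ht htlt
      obtain ⟨a, haS, hta⟩ := exists_lt_of_lt_csSup hSne htlt
      exact haS.2 t ht hta.le
    have htmB1 : Φ tm x ∈ {y : Σ b, E b | ‖ps y.1 y.2‖ ≤ 1 ∧ ‖pu y.1 y.2‖ ≤ 1} := by
      rcases eq_or_lt_of_le htm0 with heq | hpos
      · rw [← heq, hΦ0]; exact hx1
      · have htd : Tendsto (fun t : ℝ => Φ t x) (𝓝[<] tm) (𝓝 (Φ tm x)) :=
          ((horb x).tendsto tm).mono_left nhdsWithin_le_nhds
        refine hB1closed.mem_of_tendsto htd ?_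
        filter_upwards [Ioo_mem_nhdsLT_of_mem (⟨hpos, le_refl tm⟩ : tm ∈ Set.Ioc 0 tm)]
          with t htIoo
        exact hmem_lt t htIoo.1.le htIoo.2
    have hmem_le : ∀ t, 0 ≤ t → t ≤ tm →
        Φ t x ∈ {y : Σ b, E b | ‖ps y.1 y.2‖ ≤ 1 ∧ ‖pu y.1 y.2‖ ≤ 1} := by
      intro t ht htle
      rcases lt_or_eq_of_le htle with h' | h'
      · exact hmem_lt t ht h'
      · rw [h']; exact htmB1
    have hu1 : ‖pu (Φ tm x).1 (Φ tm x).2‖ = 1 := by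
      by_contra hne
      have hlt : ‖pu (Φ tm x).1 (Φ tm x).2‖ < 1 := lt_of_le_of_ne htmB1.2 hne
      set y := Φ tm x with hydef
      have hq : Continuous fun d : ℝ => ‖pu (Φ d y).1 (Φ d y).2‖ :=
        hGc.comp (horb y)
      have h0q : ‖pu (Φ 0 y).1 (Φ 0 y).2‖ < 1 := by rw [hΦ0]; exact hlt
      have hnh : (fun d : ℝ => ‖pu (Φ d y).1 (Φ d y).2‖) ⁻¹' (Set.Iio 1) ∈ 𝓝 (0:ℝ) :=
        hq.continuousAt.preimage_mem_nhds (Iio_mem_nhds h0q)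
      obtain ⟨ε, hε, hball⟩ := Metric.mem_nhds_iff.mp hnh
      have hcand : tm + ε/2 ∈ S := by
        refine ⟨by linarith, fun s hs0 hs' => ?_⟩
        rcases le_or_gt s tm with hstm | hstm
        · exact hmem_le s hs0 hstm
        · have hd0 : 0 < s - tm := by linarith
          have hdε : dist (s - tm) (0:ℝ) < ε := by
            rw [Real.dist_eq, sub_zero, abs_of_pos hd0]
            linarith
          have hsplit : Φ s x = Φ (s - tm) y := by
            rw [hydef, ← hΦadd]
            congr 1
            ring
          rw [hsplit]
          constructor
          · have h1 := hS (s - tm) hd0.le y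
            have he1 : Real.exp (-(α * (s - tm))) ≤ 1 :=
              Real.exp_le_one_iff.mpr (neg_nonpos.mpr (mul_nonneg hα.le hd0.le))
            have hy1 : ‖ps y.1 y.2‖ ≤ 1 := htmB1.1
            nlinarith [norm_nonneg (ps y.1 y.2), Real.exp_pos (-(α * (s - tm)))]
          · exact le_of_lt (hball (Metric.mem_ball.mpr hdε))
      have hle := le_csSup hSbdd hcand
      linarith
    exact ⟨tm, htm0, ⟨htmB1.1, hu1⟩, fun t ht htle => hmem_le t ht htle⟩
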